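/- Let G be a group whose derived subgroup G' is generated by a finite set T of elements each of which has finite conjugacy class in G (equivalently, centralizer of finite index). Then the center of ⟨T⟩ has finite index in ⟨T⟩, and hence by Schur's theorem the derived subgroup ⟨T⟩' is finite; in particular G is finite-by-metabelian. -/

import Mathlib

open scoped commutatorElement

private lemma comm_mul_center_left {H : Type*} [Group H] {z : H}
    (hz : z ∈ Subgroup.center H) (a b : H) : ⁅a * z, b⁆ = ⁅a, b⁆ := by
  have key : z * b * z⁻¹ = b := by
    rw [← Subgroup.mem_center_iff.mp hz b, mul_inv_cancel_right]
  calc (a * z) * b * (a * z)⁻¹ * b⁻¹ = a * (z * b * z⁻¹) * a⁻¹ * b⁻¹ := by group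
    _ = a * b * a⁻¹ * b⁻¹ := by rw [key]

private lemma comm_mul_center_right {H : Type*} [Group H] {z : H}
    (hz : z ∈ Subgroup.center H) (a b : H) : ⁅a, b * z⁆ = ⁅a, b⁆ := by
  have key : z * a⁻¹ * z⁻¹ = a⁻¹ := by
    rw [← Subgroup.mem_center_iff.mp hz a⁻¹, mul_inv_cancel_right]
  calc a * (b * z) * a⁻¹ * (b * z)⁻¹ = a * b * (z * a⁻¹ * z⁻¹) * b⁻¹ := by group
    _ = a * b * a⁻¹ * b⁻¹ := by rw [key]

private lemma finite_commutatorSet_of_finiteIndex_center {H : Type*} [Group H]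
    [(Subgroup.center H).FiniteIndex] : Finite (commutatorSet H) := by
  set Z := Subgroup.center H
  have : (commutatorSet H) ⊆
      Set.range (fun p : (H ⧸ Z) × (H ⧸ Z) => ⁅p.1.out, p.2.out⁆) := by
    rintro _ ⟨a, b, rfl⟩
    refine ⟨(QuotientGroup.mk a, QuotientGroup.mk b), ?_⟩
    obtain ⟨z, hz⟩ := QuotientGroup.mk_out_eq_mul Z a
    obtain ⟨w, hw⟩ := QuotientGroup.mk_out_eq_mul Z b
    simp only [hz, hw]
    rw [comm_mul_center_left z.2, comm_mul_center_right w.2]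
  exact (Set.Finite.subset (Set.finite_range _) this).to_subtype

/-- If the derived subgroup of `G` is generated by a finite set `T` of
elements each having finite conjugacy class in `G`, then the center of `⟨T⟩` has finite
index in `⟨T⟩`, the derived subgroup of `⟨T⟩` is finite, and `G` is finite-by-metabelian
(there is a finite normal subgroup `N` with `G/N` metabelian, i.e. `G'' ≤ N`). -/
theorem stmt9 {G : Type*} [Group G] (T : Finset G)
    (hgen : Subgroup.closure (T : Set G) = commutator G)
    (hfc : ∀ t ∈ T, (Set.range fun x : G => x⁻¹ * t * x).Finite) :
    (Subgroup.center ↥(Subgroup.closure (T : Set G))).FiniteIndex ∧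
      Finite ↥(commutator ↥(Subgroup.closure (T : Set G))) ∧
      ∃ N : Subgroup G, N.Normal ∧ Finite N ∧ derivedSeries G 2 ≤ N := by
  rw [hgen]
  -- each centralizer has finite index
  have hcent : ∀ t ∈ T, (Subgroup.centralizer {t}).FiniteIndex := by
    intro t ht
    have horb : (MulAction.orbit (ConjAct G) t).Finite := by
      refine (hfc t ht).subset ?_
      rintro _ ⟨g, rfl⟩
      exact ⟨(ConjAct.ofConjAct g)⁻¹, by simp [ConjAct.smul_def, mul_assoc]⟩
    refine ⟨?_⟩
    rw [Subgroup.centralizer_eq_comap_stabilizer]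
    erw [Subgroup.index_comap,
      MonoidHom.range_eq_top_of_surjective _ ConjAct.toConjAct.surjective,
      Subgroup.relIndex_top_right, MulAction.index_stabilizer]
    exact ((Set.ncard_pos horb).mpr ⟨t, MulAction.mem_orbit_self t⟩).ne'
  -- the intersection of the centralizers
  have hCfi : (⨅ t : T, Subgroup.centralizer {(t : G)}).FiniteIndex :=
    Subgroup.finiteIndex_iInf fun t => hcent t t.2
  -- C ∩ H is contained in the center of H
  have hle : (⨅ t : T, Subgroup.centralizer {(t : G)}).subgroupOf (commutator G) ≤
      Subgroup.center (commutator G) := by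
    intro c hc
    rw [Subgroup.mem_center_iff]
    have hcval : ∀ t ∈ T, t * (c : G) = (c : G) * t := by
      intro t ht
      exact Subgroup.mem_iInf.mp hc ⟨t, ht⟩ t rfl
    have hHle : commutator G ≤ Subgroup.centralizer {(c : G)} := by
      refine hgen.ge.trans ((Subgroup.closure_le _).mpr ?_)
      intro t ht
      rw [SetLike.mem_coe, Subgroup.mem_centralizer_iff]
      rintro s rfl
      exact (hcval t ht).symm
    intro h
    ext
    exact (hHle h.2 (c : G) rfl).symm
  haveI hZfi : (Subgroup.center (commutator G)).FiniteIndex :=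
    Subgroup.finiteIndex_of_le hle
  haveI : Finite (commutatorSet (commutator G)) :=
    finite_commutatorSet_of_finiteIndex_center
  haveI hfin : Finite (commutator (commutator G)) := inferInstance
  refine ⟨hZfi, hfin, ?_⟩
  have hmap : (commutator ↥(commutator G)).map (commutator G).subtype =
      ⁅commutator G, commutator G⁆ := by
    have h := Subgroup.map_commutator (⊤ : Subgroup ↥(commutator G)) ⊤ (commutator G).subtype
    rw [← MonoidHom.range_eq_map, Subgroup.range_subtype] at h
    exact h
  refine ⟨(commutator ↥(commutator G)).map (commutator G).subtype, ?_, ?_, ?_⟩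
  · rw [hmap]; infer_instance
  · exact Finite.of_equiv _ ((commutator ↥(commutator G)).equivMapOfInjective
      (commutator G).subtype (commutator G).subtype_injective).toEquiv
  · rw [hmap, show (2 : ℕ) = 1 + 1 from rfl, derivedSeries_succ, derivedSeries_one]
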